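/- If the closed unit ball B_X of X is weakly p-precompact, then a bounded subset M of K(X,Y) is equicompact if and only if M is uniformly p-convergent. -/

import Mathlib

open Filter Topology Metric Bornology ENNReal

noncomputable section

universe u v w

variable {X : Type*} {Y : Type*} {Z : Type*}

section Defs
variable [NormedAddCommGroup X] [NormedSpace ℝ X]
variable [NormedAddCommGroup Y] [NormedSpace ℝ Y]

/-- A sequence is weakly `p`-summable if `(x*(xₙ))ₙ ∈ ℓ_p` for every functional `x*`;
for `p = ∞` we use weakly null sequences. -/
def WeaklyPSummable (p : ℝ≥0∞) (x : ℕ → X) : Prop :=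
  if p = ⊤ then ∀ f : X →L[ℝ] ℝ, Tendsto (fun n => f (x n)) atTop (𝓝 0)
  else ∀ f : X →L[ℝ] ℝ, Memℓp (fun n => f (x n)) p

/-- A set of operators is uniformly `p`-convergent if every weakly `p`-summable
sequence converges to `0` uniformly on the set. -/
def UnifPConvergent (p : ℝ≥0∞) (K : Set (X →L[ℝ] Y)) : Prop :=
  ∀ x : ℕ → X, WeaklyPSummable p x →
    ∀ ε > (0 : ℝ), ∃ N : ℕ, ∀ n ≥ N, ∀ T ∈ K, ‖T (x n)‖ < ε

/-- A `p`-convergent operator maps weakly `p`-summable sequences to norm-null sequences. -/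
def PConvergentOp (p : ℝ≥0∞) (T : X →L[ℝ] Y) : Prop :=
  ∀ x : ℕ → X, WeaklyPSummable p x → Tendsto (fun n => ‖T (x n)‖) atTop (𝓝 0)

/-- A sequence is weakly `p`-Cauchy if all differences along pairs of increasing
index sequences are weakly `p`-summable. -/
def WeaklyPCauchy (p : ℝ≥0∞) (x : ℕ → X) : Prop :=
  ∀ m k : ℕ → ℕ, StrictMono m → StrictMono k →
    WeaklyPSummable p (fun n => x (m n) - x (k n))

/-- A set is weakly `p`-precompact if every sequence in it has a weakly `p`-Cauchy
subsequence. -/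
def WeaklyPPrecompact (p : ℝ≥0∞) (A : Set X) : Prop :=
  ∀ x : ℕ → X, (∀ n, x n ∈ A) →
    ∃ s : ℕ → ℕ, StrictMono s ∧ WeaklyPCauchy p (fun n => x (s n))

/-- `B` is `U`-bounded: bounded and with positive distance to the boundary of `U`. -/
def UBounded (U B : Set X) : Prop :=
  IsBounded B ∧ B ⊆ U ∧ ∃ d > (0 : ℝ), ∀ x ∈ B, ball x d ⊆ U

/-- A set of operators is equicompact if every bounded sequence has a subsequence on
which the operators converge in norm, uniformly on the set. -/
def Equicompact (M : Set (X →L[ℝ] Y)) : Prop :=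
  ∀ x : ℕ → X, IsBounded (Set.range x) →
    ∃ s : ℕ → ℕ, StrictMono s ∧ ∃ g : (X →L[ℝ] Y) → Y,
      TendstoUniformlyOn (fun n T => T (x (s n))) g atTop M

/-- A set of operators is weakly equicompact if every bounded sequence has a
subsequence on which the operators converge weakly, uniformly on the set. -/
def WeaklyEquicompact (M : Set (X →L[ℝ] Y)) : Prop :=
  ∀ x : ℕ → X, IsBounded (Set.range x) →
    ∃ s : ℕ → ℕ, StrictMono s ∧ ∀ φ : Y →L[ℝ] ℝ, ∃ c : (X →L[ℝ] Y) → ℝ,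
      TendstoUniformlyOn (fun n T => φ (T (x (s n)))) c atTop M

/-- A weakly compact operator: the image of every bounded sequence has a weakly
convergent subsequence. -/
def WeaklyCompactOp (T : X →L[ℝ] Y) : Prop :=
  ∀ x : ℕ → X, IsBounded (Set.range x) →
    ∃ s : ℕ → ℕ, StrictMono s ∧ ∃ y : Y,
      ∀ φ : Y →L[ℝ] ℝ, Tendsto (fun n => φ (T (x (s n)))) atTop (𝓝 (φ y))

/-- A space has the `p`-Schur property if weakly `p`-summable sequences are norm null. -/
def PSchur (p : ℝ≥0∞) (W : Type*) [NormedAddCommGroup W] [NormedSpace ℝ W] : Prop :=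
  ∀ x : ℕ → W, WeaklyPSummable p x → Tendsto (fun n => ‖x n‖) atTop (𝓝 0)

/-- A set is relatively weakly `p`-compact if every sequence in it has a subsequence
weakly `p`-convergent to a point of the space. -/
def RelWeaklyPCompact (p : ℝ≥0∞) (A : Set X) : Prop :=
  ∀ x : ℕ → X, (∀ n, x n ∈ A) →
    ∃ s : ℕ → ℕ, StrictMono s ∧ ∃ a : X, WeaklyPSummable p (fun n => x (s n) - a)

/-- `f` is weakly `p`-sequentially continuous on `U` if it maps `U`-bounded weakly
`p`-Cauchy sequences to norm convergent sequences. -/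
def WeaklyPSeqContinuous (p : ℝ≥0∞) (U : Set X) (f : X → Y) : Prop :=
  ∀ x : ℕ → X, (∀ n, x n ∈ U) → UBounded U (Set.range x) → WeaklyPCauchy p x →
    ∃ y : Y, Tendsto (fun n => f (x n)) atTop (𝓝 y)

end Defs
section Aux
variable [NormedAddCommGroup X] [NormedSpace ℝ X]
variable [NormedAddCommGroup Y] [NormedSpace ℝ Y]

lemma weakNull_of_wps {p : ℝ≥0∞} (hp : 1 ≤ p) (hp' : p ≠ ⊤) {x : ℕ → X}
    (hx : WeaklyPSummable p x) (f : X →L[ℝ] ℝ) :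
    Tendsto (fun n => f (x n)) atTop (𝓝 0) := by
  rw [WeaklyPSummable, if_neg hp'] at hx
  have hq : 0 < p.toReal := ENNReal.toReal_pos (zero_lt_one.trans_le hp).ne' hp'
  have hs : Summable fun n => ‖f (x n)‖ ^ p.toReal := (hx f).summable hq
  have h0 := hs.tendsto_atTop_zero
  have hcont : Tendsto (fun t : ℝ => t ^ (p.toReal)⁻¹) (𝓝 0) (𝓝 0) := by
    have := (Real.continuousAt_rpow_const 0 (p.toReal)⁻¹ (Or.inr (by positivity))).tendsto
    simpa [Real.zero_rpow (inv_ne_zero hq.ne')] using this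
  have h1 := hcont.comp h0
  have h2 : (fun t : ℝ => t ^ (p.toReal)⁻¹) ∘ (fun n => ‖f (x n)‖ ^ p.toReal)
      = fun n => ‖f (x n)‖ := by
    funext n; exact Real.rpow_rpow_inv (norm_nonneg _) hq.ne'
  rw [h2] at h1
  exact tendsto_zero_iff_norm_tendsto_zero.mpr h1

lemma bounded_of_wps {p : ℝ≥0∞} (hp : 1 ≤ p) (hp' : p ≠ ⊤) {x : ℕ → X}
    (hx : WeaklyPSummable p x) : IsBounded (Set.range x) := by
  have h : ∀ f : StrongDual ℝ X, ∃ C, ∀ n : ℕ,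
      ‖(NormedSpace.inclusionInDoubleDualLi ℝ (x n)) f‖ ≤ C := by
    intro f
    obtain ⟨C, hC⟩ := (weakNull_of_wps hp hp' hx f).norm.bddAbove_range
    exact ⟨C, fun n => by
      simpa [NormedSpace.inclusionInDoubleDualLi, NormedSpace.dual_def] using
        hC (Set.mem_range_self n)⟩
  obtain ⟨C', hC'⟩ := banach_steinhaus h
  rw [isBounded_iff_forall_norm_le]
  refine ⟨C', ?_⟩
  rintro _ ⟨n, rfl⟩
  simpa [(NormedSpace.inclusionInDoubleDualLi ℝ (E := X)).norm_map] using hC' n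

lemma wps_smul {p : ℝ≥0∞} {x : ℕ → X} (hx : WeaklyPSummable p x) (c : ℝ) :
    WeaklyPSummable p (fun n => c • x n) := by
  unfold WeaklyPSummable at hx ⊢
  split_ifs with h
  · rw [if_pos h] at hx
    intro f
    have := (hx f).const_mul c
    simpa [map_smul, smul_eq_mul, mul_zero] using this
  · rw [if_neg h] at hx
    intro f
    have := (hx f).const_smul (c : ℝ)
    simpa [map_smul, smul_eq_mul, Pi.smul_def] using this
end Aux

/-- If `B_X` is weakly `p`-precompact, then a bounded set `M` of compact
operators is equicompact iff it is uniformly `p`-convergent. -/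
theorem stmt7 [NormedAddCommGroup X] [NormedSpace ℝ X] [CompleteSpace X]
    [NormedAddCommGroup Y] [NormedSpace ℝ Y] [CompleteSpace Y]
    (p : ℝ≥0∞) (hp : 1 ≤ p) (hp' : p ≠ ⊤)
    (hX : WeaklyPPrecompact p (closedBall (0 : X) 1))
    (M : Set (X →L[ℝ] Y)) (hMb : IsBounded M)
    (hMc : ∀ T ∈ M, IsCompactOperator T) :
    Equicompact M ↔ UnifPConvergent p M := by
  constructor
  · intro hE x hx ε hε
    by_contra hcon
    push_neg at hcon
    obtain ⟨φ, hφ, hφP⟩ := extraction_of_frequently_atTop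
      (P := fun n => ∃ T ∈ M, ε ≤ ‖T (x n)‖)
      (frequently_atTop.mpr fun N => by
        obtain ⟨n, hn, T, hTM, hT⟩ := hcon N
        exact ⟨n, hn, T, hTM, hT⟩)
    obtain ⟨s, hs, g, hU⟩ := hE (x ∘ φ)
      ((bounded_of_wps hp hp' hx).subset (Set.range_comp_subset_range φ x))
    have hg0 : ∀ T ∈ M, g T = 0 := by
      intro T hT
      apply NormedSpace.eq_zero_of_forall_dual_eq_zero ℝ
      intro ψ
      have h1 : Tendsto (fun n => T ((x ∘ φ) (s n))) atTop (𝓝 (g T)) := hU.tendsto_at hT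
      have h2 : Tendsto (fun n => ψ (T (x (φ (s n))))) atTop (𝓝 (ψ (g T))) :=
        (ψ.continuous.tendsto _).comp h1
      have h3 : Tendsto (fun n => ψ (T (x n))) atTop (𝓝 0) :=
        weakNull_of_wps hp hp' hx (ψ.comp T)
      have h4 : Tendsto (fun n => ψ (T (x (φ (s n))))) atTop (𝓝 0) :=
        h3.comp (hφ.comp hs).tendsto_atTop
      exact tendsto_nhds_unique h2 h4
    rw [Metric.tendstoUniformlyOn_iff] at hU
    obtain ⟨n, hn⟩ := (hU ε hε).exists
    obtain ⟨T, hTM, hTε⟩ := hφP (s n)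
    have := hn T hTM
    rw [hg0 T hTM, Function.comp_apply, dist_zero_left] at this
    linarith
  · intro hU x hxb
    obtain ⟨R, hR⟩ := isBounded_iff_forall_norm_le.mp hxb
    set R' : ℝ := max R 1 with hR'def
    have hR'pos : (0 : ℝ) < R' := lt_of_lt_of_le zero_lt_one (le_max_right _ _)
    have hy : ∀ n, R'⁻¹ • x n ∈ closedBall (0 : X) 1 := by
      intro n
      rw [mem_closedBall_zero_iff, norm_smul, norm_inv, Real.norm_eq_abs,
        abs_of_pos hR'pos]
      rw [inv_mul_le_iff₀ hR'pos, mul_one]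
      exact (hR (x n) (Set.mem_range_self n)).trans (le_max_left _ _)
    obtain ⟨s, hs, hC⟩ := hX (fun n => R'⁻¹ • x n) hy
    have hC' : WeaklyPCauchy p (fun n => x (s n)) := by
      intro m k hm hk
      have := wps_smul (hC m k hm hk) R'
      have heq : (fun n => R' • (R'⁻¹ • x (s (m n)) - R'⁻¹ • x (s (k n))))
          = fun n => x (s (m n)) - x (s (k n)) := by
        funext n
        rw [smul_sub, smul_inv_smul₀ hR'pos.ne', smul_inv_smul₀ hR'pos.ne']
      rwa [heq] at this
    have hUC : UniformCauchySeqOn (fun n T => T (x (s n))) atTop M := by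
      rw [Metric.uniformCauchySeqOn_iff]
      by_contra hcon
      push_neg at hcon
      obtain ⟨ε, hε, hcon⟩ := hcon
      choose a ha b hb T hTM hTd using hcon
      let Nk : ℕ → ℕ := fun k => k.rec 0 (fun _ prev => max (a prev) (b prev) + 1)
      have hNk : ∀ k, Nk (k + 1) = max (a (Nk k)) (b (Nk k)) + 1 := fun k => rfl
      have haSM : StrictMono (fun k => a (Nk k)) := by
        apply strictMono_nat_of_lt_succ
        intro k
        calc a (Nk k) < max (a (Nk k)) (b (Nk k)) + 1 :=
              Nat.lt_succ_of_le (le_max_left _ _)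
          _ ≤ a (Nk (k + 1)) := by rw [hNk]; exact ha _
      have hbSM : StrictMono (fun k => b (Nk k)) := by
        apply strictMono_nat_of_lt_succ
        intro k
        calc b (Nk k) < max (a (Nk k)) (b (Nk k)) + 1 :=
              Nat.lt_succ_of_le (le_max_right _ _)
          _ ≤ b (Nk (k + 1)) := by rw [hNk]; exact hb _
      have hd := hC' _ _ haSM hbSM
      obtain ⟨N, hN⟩ := hU _ hd ε hε
      have h1 := hN N le_rfl (T (Nk N)) (hTM _)
      have h2 := hTd (Nk N)
      rw [dist_eq_norm, ← map_sub] at h2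
      exact absurd h1 (not_lt.mpr h2)
    have hptw : ∀ T ∈ M, ∃ y, Tendsto (fun n => T (x (s n))) atTop (𝓝 y) := by
      intro T hT
      apply cauchySeq_tendsto_of_complete
      rw [Metric.cauchySeq_iff]
      intro ε hε
      rw [Metric.uniformCauchySeqOn_iff] at hUC
      obtain ⟨N, hN⟩ := hUC ε hε
      exact ⟨N, fun m hm n hn => hN m hm n hn T hT⟩
    classical
    refine ⟨s, hs, fun T => if h : ∃ y, Tendsto (fun n => T (x (s n))) atTop (𝓝 y)
      then h.choose else 0, ?_⟩
    apply hUC.tendstoUniformlyOn_of_tendsto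
    intro T hT
    rw [dif_pos (hptw T hT)]
    exact (hptw T hT).choose_spec
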